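/- Let G and H be finite simple graphs and let A be a unital (not necessarily commutative) ring. Let p : V(G) → V(H) → A be a family of elements such that for every x ∈ V(G) one has ∑_{y ∈ V(H)} p x y = 1, and such that p x a · p x' a' = 0 whenever x is adjacent to x' in G and a is not adjacent to a' in H. If u, u' ∈ V(G) are joined by a walk of length ℓ ≥ 1 in G, and v, v' ∈ V(H) are joined by no walk of length ℓ in H, then p u v · p u' v' = 0. -/
import Mathlib

private lemma stmt0_aux {V W : Type*} [Fintype V] [Fintype W]
    (G : SimpleGraph V) (H : SimpleGraph W)
    {A : Type*} [Ring A] (p : V → W → A)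
    (hsum : ∀ x : V, ∑ y : W, p x y = 1)
    (hrel : ∀ (x x' : V) (a a' : W), G.Adj x x' → ¬ H.Adj a a' → p x a * p x' a' = 0) :
    ∀ (n : ℕ) (u u' : V) (v v' : W),
      (∃ w : G.Walk u u', w.length = n + 1) →
      (¬ ∃ w : H.Walk v v', w.length = n + 1) →
      p u v * p u' v' = 0 := by
  intro n
  induction n with
  | zero =>
    intro u u' v v' hwalk hnowalk
    obtain ⟨w, hw⟩ := hwalk
    cases w with
    | nil => simp at hw
    | cons h w' =>
      simp only [SimpleGraph.Walk.length_cons, Nat.add_right_cancel_iff] at hw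
      cases w' with
      | nil =>
        have hadj : ¬ H.Adj v v' := by
          intro hvv'
          exact hnowalk ⟨SimpleGraph.Walk.cons hvv' SimpleGraph.Walk.nil, rfl⟩
        exact hrel u u' v v' h hadj
      | cons h2 w2 => simp at hw
  | succ n ih =>
    intro u u' v v' hwalk hnowalk
    obtain ⟨w, hw⟩ := hwalk
    cases w with
    | nil => simp at hw
    | @cons _ x _ h w' =>
      simp only [SimpleGraph.Walk.length_cons, Nat.add_right_cancel_iff] at hw
      have : p u v * p u' v' = ∑ a : W, p u v * (p x a * p u' v') := by
        rw [← Finset.mul_sum, ← Finset.sum_mul, hsum x, one_mul]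
      rw [this]
      apply Finset.sum_eq_zero
      intro a _
      by_cases hva : H.Adj v a
      · have hno : ¬ ∃ w : H.Walk a v', w.length = n + 1 := by
          rintro ⟨wa, hwa⟩
          exact hnowalk ⟨SimpleGraph.Walk.cons hva wa, by simp [hwa]⟩
        rw [ih x u' a v' ⟨w', hw⟩ hno, mul_zero]
      · rw [← mul_assoc, hrel u x v a h hva, zero_mul]

/-- If `p : V(G) → V(H) → A` satisfies the relations of the quantum
homomorphism space `Mor⁺(G,H)` (rows are "PVM-like": sum to 1; and
`p x a * p x' a' = 0` whenever `x ~ x'` in `G` but `a ≁ a'` in `H`), and there is a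
walk of length `ℓ ≥ 1` from `u` to `u'` in `G` but no walk of length `ℓ` from `v`
to `v'` in `H`, then `p u v * p u' v' = 0`. -/
theorem stmt0 {V W : Type*} [Fintype V] [Fintype W]
    (G : SimpleGraph V) (H : SimpleGraph W)
    {A : Type*} [Ring A] (p : V → W → A)
    (hsum : ∀ x : V, ∑ y : W, p x y = 1)
    (hrel : ∀ (x x' : V) (a a' : W), G.Adj x x' → ¬ H.Adj a a' → p x a * p x' a' = 0)
    (u u' : V) (v v' : W) (ℓ : ℕ) (hℓ : 1 ≤ ℓ)
    (hwalk : ∃ w : G.Walk u u', w.length = ℓ)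
    (hnowalk : ¬ ∃ w : H.Walk v v', w.length = ℓ) :
    p u v * p u' v' = 0 := by
  obtain ⟨n, rfl⟩ := Nat.exists_eq_add_of_le hℓ
  rw [Nat.add_comm] at hwalk hnowalk
  exact stmt0_aux G H p hsum hrel n u u' v v' hwalk hnowalk
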